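/- Let α, β, γ : [0,T] → ℝ with α(s) = β(s) + γ(s) for all s, where γ is non-negative and non-decreasing. Define the one-sided reflection map R(ξ)(t) = ξ(t) - min(0, inf_{s ∈ [0,t]} ξ(s)). Then R(α)(t) ≥ R(β)(t) for all t ∈ [0,T]. -/

import Mathlib

open Set

/-- The one-sided reflection map `R(ξ)(t) = ξ(t) - min(0, inf_{s ∈ [0,t]} ξ(s))`. -/
noncomputable def reflect (ξ : ℝ → ℝ) (t : ℝ) : ℝ :=
  ξ t - min 0 (sInf (ξ '' Set.Icc 0 t))

theorem reflect_monotone_in_nondecreasing_part (T : ℝ) (hT : 0 < T)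
    (a b g : ℝ → ℝ)
    (hBa : BddBelow (a '' Set.Icc 0 T)) (hBb : BddBelow (b '' Set.Icc 0 T))
    (hsum : ∀ s ∈ Set.Icc 0 T, a s = b s + g s)
    (hg_nonneg : ∀ s ∈ Set.Icc 0 T, 0 ≤ g s)
    (hg_mono : ∀ s ∈ Set.Icc 0 T, ∀ t ∈ Set.Icc 0 T, s ≤ t → g s ≤ g t) :
    ∀ t ∈ Set.Icc 0 T, reflect b t ≤ reflect a t := by
  intro t ht
  obtain ⟨ht0, htT⟩ := ht
  have hsub : Set.Icc (0:ℝ) t ⊆ Set.Icc 0 T := Set.Icc_subset_Icc le_rfl htT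
  have htT' : t ∈ Set.Icc (0:ℝ) T := ⟨ht0, htT⟩
  have hne : (Set.Icc (0:ℝ) t).Nonempty := ⟨0, by constructor <;> linarith⟩
  have hBa' : BddBelow (a '' Set.Icc 0 t) := hBa.mono (Set.image_mono hsub)
  have hBb' : BddBelow (b '' Set.Icc 0 t) := hBb.mono (Set.image_mono hsub)
  -- key: sInf (a '' Icc 0 t) ≤ sInf (b '' Icc 0 t) + g t
  have hkey : sInf (a '' Set.Icc 0 t) ≤ sInf (b '' Set.Icc 0 t) + g t := by
    have : sInf (a '' Set.Icc 0 t) - g t ≤ sInf (b '' Set.Icc 0 t) := by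
      apply le_csInf (hne.image b)
      rintro x ⟨s, hs, rfl⟩
      have hsT : s ∈ Set.Icc 0 T := hsub hs
      have h1 : sInf (a '' Set.Icc 0 t) ≤ a s := csInf_le hBa' ⟨s, hs, rfl⟩
      have h2 : a s = b s + g s := hsum s hsT
      have h3 : g s ≤ g t := hg_mono s hsT t htT' hs.2
      linarith
    linarith
  have hgt : 0 ≤ g t := hg_nonneg t htT'
  have hmin : min 0 (sInf (a '' Set.Icc 0 t)) ≤ min 0 (sInf (b '' Set.Icc 0 t)) + g t := by
    rcases le_total (sInf (b '' Set.Icc 0 t)) 0 with h | h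
    · calc min 0 (sInf (a '' Set.Icc 0 t)) ≤ sInf (b '' Set.Icc 0 t) + g t :=
            le_trans (min_le_right _ _) hkey
        _ = min 0 (sInf (b '' Set.Icc 0 t)) + g t := by rw [min_eq_right h]
    · have : min 0 (sInf (a '' Set.Icc 0 t)) ≤ 0 := min_le_left _ _
      rw [min_eq_left h]; linarith
  have hat : a t = b t + g t := hsum t htT'
  simp only [reflect]
  linarith
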